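/- Smoothing bias bound: let X be a real random variable with a density bounded by f_∞ and let γ > 0 and a > 0. Then for every x ∈ ℝ, |P(X ≤ x) − E[g_{aγ}(x − X)]| ≤ 2 a γ f_∞, i.e. |E[1{x − X ≥ 0} − g_{aγ}(x − X)]| ≤ 2 a γ f_∞. -/

import Mathlib

open MeasureTheory Real

/-- The piecewise-linear smoothing of the indicator function. -/
noncomputable def gfun (x : ℝ) : ℝ :=
  if 1 ≤ x then 1 else if -1 ≤ x then (x + 1) / 2 else 0

/-- Rescaled smoothing function `g_h(x) = g(x/h)`. -/
noncomputable def gsm (h x : ℝ) : ℝ := gfun (x / h)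

lemma gfun_mem (y : ℝ) : gfun y ∈ Set.Icc (0:ℝ) 1 := by
  unfold gfun
  split_ifs with h1 h2 <;> constructor <;> simp_all <;> linarith

lemma measurable_gfun : Measurable gfun := by
  unfold gfun
  apply Measurable.ite (measurableSet_le measurable_const measurable_id) measurable_const
  apply Measurable.ite (measurableSet_le measurable_const measurable_id)
  · fun_prop
  · fun_prop

lemma gfun_one {y : ℝ} (hy : 1 ≤ y) : gfun y = 1 := by simp [gfun, hy]

lemma gfun_zero {y : ℝ} (hy : y < -1) : gfun y = 0 := by
  simp only [gfun]
  rw [if_neg (by linarith), if_neg (by linarith)]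

theorem smoothing_bias_bound
    {Ω : Type} [MeasurableSpace Ω] (μ : Measure Ω) [IsProbabilityMeasure μ]
    (X : Ω → ℝ) (hX : Measurable X)
    (fd : ℝ → ℝ) (fbd : ℝ)
    (hdens : Measure.map X μ =
      MeasureTheory.volume.withDensity (fun t => ENNReal.ofReal (fd t)))
    (hfd0 : ∀ t, 0 ≤ fd t) (hfd : ∀ t, fd t ≤ fbd)
    (γ a : ℝ) (hγ : 0 < γ) (ha : 0 < a) (x : ℝ) :
    |(μ {ω | X ω ≤ x}).toReal - ∫ ω, gsm (a * γ) (x - X ω) ∂μ| ≤ 2 * a * γ * fbd := by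
  set h := a * γ with hh_def
  have hh : 0 < h := mul_pos ha hγ
  have hfbd0 : 0 ≤ fbd := le_trans (hfd0 0) (hfd 0)
  -- pointwise bound
  have key : ∀ t : ℝ, |Set.indicator {t : ℝ | t ≤ x} (fun _ => (1:ℝ)) t - gsm h (x - t)|
      ≤ Set.indicator (Set.Icc (x - h) (x + h)) (fun _ => (1:ℝ)) t := by
    intro t
    by_cases ht1 : t < x - h
    · have : (1:ℝ) ≤ (x - t) / h := (le_div_iff₀ hh).2 (by linarith)
      have hg : gsm h (x - t) = 1 := gfun_one this
      have hi : t ∈ {t : ℝ | t ≤ x} := by simp; linarith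
      rw [Set.indicator_of_mem hi, hg]
      simp [Set.indicator_apply]
      positivity
    · by_cases ht2 : x + h < t
      · have : (x - t) / h < -1 := by
          rw [div_lt_iff₀ hh]; linarith
        have hg : gsm h (x - t) = 0 := gfun_zero this
        have hi : t ∉ {t : ℝ | t ≤ x} := by simp; linarith
        rw [Set.indicator_of_notMem hi, hg]
        simp [Set.indicator_apply]
        positivity
      · have hmem : t ∈ Set.Icc (x - h) (x + h) := ⟨by linarith, by linarith⟩
        rw [Set.indicator_of_mem hmem]
        have hg := gfun_mem ((x - t) / h)
        have hgle := hg.2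
        have hg0 := hg.1
        rcases Set.indicator_eq_zero_or_self {t : ℝ | t ≤ x} (fun _ => (1:ℝ)) t with h0 | h1
        · rw [h0]; rw [abs_le]; constructor <;> simp [gsm] <;> linarith
        · rw [h1]; rw [abs_le]; constructor <;> simp [gsm] <;> linarith
  -- express measure as integral of indicator
  have hsmeas : MeasurableSet {t : ℝ | t ≤ x} := measurableSet_le measurable_id measurable_const
  have hind : (μ {ω | X ω ≤ x}).toReal
      = ∫ ω, Set.indicator {t : ℝ | t ≤ x} (fun _ => (1:ℝ)) (X ω) ∂μ := by
    have : {ω | X ω ≤ x} = X ⁻¹' {t : ℝ | t ≤ x} := rfl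
    rw [this, ← measureReal_def, ← integral_indicator_one (hX hsmeas)]
    exact integral_congr_ae (Filter.Eventually.of_forall fun ω => by
      simp [Set.indicator_apply, Set.mem_preimage])
  have hmg : Measurable fun ω => gsm h (x - X ω) := by
    apply measurable_gfun.comp
    exact ((measurable_const.sub hX)).div_const h
  have hmi : Measurable fun ω => Set.indicator {t : ℝ | t ≤ x} (fun _ => (1:ℝ)) (X ω) :=
    (measurable_const.indicator hsmeas).comp hX
  have hint1 : Integrable (fun ω => Set.indicator {t : ℝ | t ≤ x} (fun _ => (1:ℝ)) (X ω)) μ := by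
    apply Integrable.mono' (integrable_const 1) hmi.aestronglyMeasurable
    filter_upwards with ω
    simp [Set.indicator_apply]
    split_ifs <;> norm_num
  have hint2 : Integrable (fun ω => gsm h (x - X ω)) μ := by
    apply Integrable.mono' (integrable_const 1) hmg.aestronglyMeasurable
    filter_upwards with ω
    have := gfun_mem ((x - X ω) / h)
    simp only [Real.norm_eq_abs, gsm]
    rw [abs_of_nonneg this.1]; exact this.2
  have hintb : Integrable (fun ω => Set.indicator (Set.Icc (x - h) (x + h)) (fun _ => (1:ℝ)) (X ω)) μ := by
    apply Integrable.mono' (integrable_const 1)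
      (((measurable_const.indicator measurableSet_Icc).comp hX).aestronglyMeasurable)
    filter_upwards with ω
    simp [Set.indicator_apply]
    split_ifs <;> norm_num
  rw [hind, ← integral_sub hint1 hint2]
  calc |∫ ω, (Set.indicator {t : ℝ | t ≤ x} (fun _ => (1:ℝ)) (X ω) - gsm h (x - X ω)) ∂μ|
      ≤ ∫ ω, |Set.indicator {t : ℝ | t ≤ x} (fun _ => (1:ℝ)) (X ω) - gsm h (x - X ω)| ∂μ :=
        by simpa [Real.norm_eq_abs] using
          norm_integral_le_integral_norm (μ := μ)
            (fun ω => Set.indicator {t : ℝ | t ≤ x} (fun _ => (1:ℝ)) (X ω) - gsm h (x - X ω))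
    _ ≤ ∫ ω, Set.indicator (Set.Icc (x - h) (x + h)) (fun _ => (1:ℝ)) (X ω) ∂μ := by
        apply integral_mono (hint1.sub hint2).abs hintb
        intro ω; exact key (X ω)
    _ = (μ (X ⁻¹' Set.Icc (x - h) (x + h))).toReal := by
        rw [← measureReal_def, ← integral_indicator_one (hX measurableSet_Icc)]
        exact integral_congr_ae (Filter.Eventually.of_forall fun ω => by
          by_cases hc : X ω ∈ Set.Icc (x - h) (x + h) <;>
            simp [Set.indicator_apply, Set.mem_preimage, hc])
    _ ≤ 2 * a * γ * fbd := by
        have hmap : μ (X ⁻¹' Set.Icc (x - h) (x + h))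
            = Measure.map X μ (Set.Icc (x - h) (x + h)) := by
          rw [Measure.map_apply hX measurableSet_Icc]
        rw [hmap, hdens, withDensity_apply _ measurableSet_Icc]
        have hle : ∫⁻ t in Set.Icc (x - h) (x + h), ENNReal.ofReal (fd t) ∂volume
            ≤ ENNReal.ofReal fbd * ENNReal.ofReal (2 * h) := by
          calc ∫⁻ t in Set.Icc (x - h) (x + h), ENNReal.ofReal (fd t) ∂volume
              ≤ ∫⁻ _ in Set.Icc (x - h) (x + h), ENNReal.ofReal fbd ∂volume :=
                setLIntegral_mono measurable_const (fun t _ => ENNReal.ofReal_le_ofReal (hfd t))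
            _ = ENNReal.ofReal fbd * volume (Set.Icc (x - h) (x + h)) := by
                rw [setLIntegral_const]
            _ = ENNReal.ofReal fbd * ENNReal.ofReal (2 * h) := by
                rw [Real.volume_Icc]; ring_nf
        calc (∫⁻ t in Set.Icc (x - h) (x + h), ENNReal.ofReal (fd t) ∂volume).toReal
            ≤ (ENNReal.ofReal fbd * ENNReal.ofReal (2 * h)).toReal := by
              apply ENNReal.toReal_mono _ hle
              exact ENNReal.mul_ne_top ENNReal.ofReal_ne_top ENNReal.ofReal_ne_top
          _ = fbd * (2 * h) := by
              rw [← ENNReal.ofReal_mul hfbd0, ENNReal.toReal_ofReal (by positivity)]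
          _ = 2 * a * γ * fbd := by rw [hh_def]; ring
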